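/- Let T be the regular tree of degree d ≥ 3 with return probability generating function 𝒢(z) = 2(d-1)/(d-2+√(d²-4(d-1)z²)). Then the tree entropy h(T) := log d - ∑_{k≥1} p_k(o;T)/k satisfies h(T) = log( (d-1)^{d-1} / (d(d-2))^{d/2-1} ). -/

import Mathlib

theorem aux_deriv (c z s : ℝ) (hs : 0 < s) (h1 : 0 < s + c - 2) (h2 : 0 < s + c)
    (h3 : 0 < s + c - 2*z^2) (hSq : s^2 = c^2 - 4*(c-1)*z^2) :
    ((c-2)/2) * ((-(4*(c-1)*z)/s)/(s+c-2)) - (c/2) * ((-(4*(c-1)*z)/s)/(s+c))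
      = 2*z/(s+c-2*z^2) := by
  have hs' := hs.ne'
  have h1' := h1.ne'
  have h2' := h2.ne'
  have h3' := h3.ne'
  field_simp
  linear_combination (-(4*z*s)) * hSq

theorem aux_eqon (c z s : ℝ) (hz : z ≠ 0) (h1 : 0 < c - 2 + s)
    (h3 : 0 < s + c - 2*z^2) (hSq : s^2 = c^2 - 4*(c-1)*z^2) :
    (2*(c-1)/(c-2+s) - 1)/z = 2*z/(s+c-2*z^2) := by
  have h1' := h1.ne'
  have h3' := h3.ne'
  field_simp
  linear_combination (-1 : ℝ) * hSq

theorem stmt9 (d : ℕ) (hd : 3 ≤ d) (G : ℝ → ℝ)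
    (hG : ∀ z : ℝ, G z =
      2 * ((d : ℝ) - 1) / ((d : ℝ) - 2 + Real.sqrt ((d : ℝ) ^ 2 - 4 * ((d : ℝ) - 1) * z ^ 2))) :
    Real.log d - ∫ z in (0 : ℝ)..1, (G z - 1) / z =
      Real.log (((d : ℝ) - 1) ^ (d - 1) /
        (((d : ℝ) * ((d : ℝ) - 2)) ^ ((d : ℝ) / 2 - 1))) := by
  set c : ℝ := (d : ℝ) with hc
  have hc3 : (3 : ℝ) ≤ c := by rw [hc]; exact_mod_cast hd
  have hc0 : (0:ℝ) < c := by linarith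
  have hc1 : (0:ℝ) < c - 1 := by linarith
  have hc2 : (0:ℝ) < c - 2 := by linarith
  set S : ℝ → ℝ := fun z => Real.sqrt (c ^ 2 - 4 * (c - 1) * z ^ 2) with hS
  -- basic facts for z in [0,1]
  have harg : ∀ z ∈ Set.Icc (0:ℝ) 1, (c-2)^2 ≤ c ^ 2 - 4 * (c - 1) * z ^ 2 := by
    intro z hz
    have hz2 : z^2 ≤ 1 := by nlinarith [hz.1, hz.2]
    nlinarith
  have hSge : ∀ z ∈ Set.Icc (0:ℝ) 1, c - 2 ≤ S z := by
    intro z hz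
    have := Real.sqrt_le_sqrt (harg z hz)
    rwa [Real.sqrt_sq hc2.le] at this
  have hSsq : ∀ z ∈ Set.Icc (0:ℝ) 1, (S z)^2 = c ^ 2 - 4 * (c - 1) * z ^ 2 := by
    intro z hz
    exact Real.sq_sqrt (le_trans (by positivity) (harg z hz))
  have hden : ∀ z ∈ Set.Icc (0:ℝ) 1, 0 < S z + c - 2 * z ^ 2 := by
    intro z hz
    have h1 := hSge z hz
    have hz2 : z^2 ≤ 1 := by nlinarith [hz.1, hz.2]
    nlinarith
  -- the simplified integrand
  set f : ℝ → ℝ := fun z => 2 * z / (S z + c - 2 * z ^ 2) with hf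
  -- the antiderivative
  set F : ℝ → ℝ := fun z => ((c - 2)/2) * Real.log (S z + c - 2) - (c/2) * Real.log (S z + c)
    with hF
  have huIcc : Set.uIcc (0:ℝ) 1 = Set.Icc 0 1 := Set.uIcc_of_le (by norm_num)
  -- step 1: rewrite the integrand
  have hcongr : ∫ z in (0:ℝ)..1, (G z - 1) / z = ∫ z in (0:ℝ)..1, f z := by
    apply intervalIntegral.integral_congr
    intro z hz
    rw [huIcc] at hz
    rcases eq_or_ne z 0 with rfl | hz0
    · simp [hf, hS]
    · simp only [hf]
      rw [hG z]
      have h1 : 0 < c - 2 + S z := by have := hSge z hz; nlinarith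
      exact aux_eqon c z (S z) hz0 h1 (hden z hz) (hSsq z hz)
  -- step 2: FTC
  have hderiv : ∀ z ∈ Set.uIcc (0:ℝ) 1, HasDerivAt F (f z) z := by
    rw [huIcc]
    intro z hz
    have hargpos : 0 < c ^ 2 - 4 * (c - 1) * z ^ 2 := lt_of_lt_of_le (by positivity) (harg z hz)
    have hSpos : 0 < S z := Real.sqrt_pos.mpr hargpos
    have h1 : 0 < S z + c - 2 := by have := hSge z hz; nlinarith
    have h2 : 0 < S z + c := by positivity
    have hu : HasDerivAt (fun z : ℝ => c ^ 2 - 4 * (c - 1) * z ^ 2) (-(8 * (c-1) * z)) z := by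
      have := ((hasDerivAt_pow 2 z).const_mul (4 * (c-1))).const_sub (c ^ 2)
      refine this.congr_deriv ?_
      ring
    have hsd : HasDerivAt S (-(4*(c-1)*z) / S z) z := by
      have := (Real.hasDerivAt_sqrt hargpos.ne').comp z hu
      refine this.congr_deriv ?_
      rw [hS]
      field_simp
      ring
    have hlog1 : HasDerivAt (fun z => Real.log (S z + c - 2))
        ((-(4*(c-1)*z) / S z) / (S z + c - 2)) z := by
      have h := ((hsd.add_const c).sub_const 2).log h1.ne'
      simpa using h
    have hlog2 : HasDerivAt (fun z => Real.log (S z + c))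
        ((-(4*(c-1)*z) / S z) / (S z + c)) z := by
      have h := (hsd.add_const c).log h2.ne'
      simpa using h
    have hFd := (hlog1.const_mul ((c-2)/2)).sub (hlog2.const_mul (c/2))
    have : ((c-2)/2) * ((-(4*(c-1)*z) / S z) / (S z + c - 2))
        - (c/2) * ((-(4*(c-1)*z) / S z) / (S z + c)) = f z :=
      aux_deriv c z (S z) hSpos h1 h2 (hden z hz) (hSsq z hz)
    rw [← this]
    exact hFd
  have hint : IntervalIntegrable f MeasureTheory.volume 0 1 := by
    apply ContinuousOn.intervalIntegrable
    rw [huIcc]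
    apply ContinuousOn.div
    · fun_prop
    · apply ContinuousOn.sub
      · exact (Real.continuous_sqrt.comp (by fun_prop)).continuousOn.add continuousOn_const
      · fun_prop
    · intro z hz
      exact (hden z hz).ne'
  have hFTC := intervalIntegral.integral_eq_sub_of_hasDerivAt hderiv hint
  rw [hcongr, hFTC]
  -- step 3: evaluate
  have hS0 : S 0 = c := by
    rw [hS]
    simp
    rw [Real.sqrt_sq hc0.le]
  have hS1 : S 1 = c - 2 := by
    rw [hS]
    simp only [one_pow, mul_one]
    rw [show c ^ 2 - 4 * (c - 1) = (c-2)^2 by ring, Real.sqrt_sq hc2.le]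
  rw [hF]
  simp only [hS0, hS1]
  rw [show c - 2 + c - 2 = 2 * (c - 2) by ring, show c - 2 + c = 2 * (c - 1) by ring,
    show c + c - 2 = 2 * (c - 1) by ring, show c + c = 2 * c by ring]
  rw [Real.log_mul two_ne_zero hc2.ne', Real.log_mul two_ne_zero hc1.ne',
    Real.log_mul two_ne_zero hc0.ne']
  -- RHS
  have hd1 : ((d - 1 : ℕ) : ℝ) = c - 1 := by
    have : (1:ℕ) ≤ d := by omega
    push_cast [Nat.cast_sub this]
    ring
  rw [Real.log_div (pow_ne_zero _ hc1.ne') ((Real.rpow_pos_of_pos (by positivity) _).ne'),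
    Real.log_pow, Real.log_rpow (by positivity), Real.log_mul hc0.ne' hc2.ne', hd1]
  ring
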